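/- Under a (p,q,δ)-block-independent arrival distribution, the standard threshold secretary algorithm (which observes the first ⌊q/e⌋ blocks and thereafter accepts the first item exceeding all previously seen values) selects the maximum-value item with probability at least 1/e - (e+1)/q - δ - (1 - 1/e)^{p-1}. -/

import Mathlib

open scoped Classical

noncomputable section

set_option maxHeartbeats 1000000

/-- Probability of an event under a distribution `μ` on permutations of `Fin n`. -/
def prOf {n : ℕ} (μ : Equiv.Perm (Fin n) → ℝ) (E : Set (Equiv.Perm (Fin n))) : ℝ :=
  ∑ π : Equiv.Perm (Fin n), if π ∈ E then μ π else 0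

/-- `μ` is a probability distribution on permutations of `Fin n`. -/
def IsDist {n : ℕ} (μ : Equiv.Perm (Fin n) → ℝ) : Prop :=
  (∀ π, 0 ≤ μ π) ∧ ∑ π : Equiv.Perm (Fin n), μ π = 1

/-- `B` assigns positions `[n]` to `q` consecutive blocks of size between `⌊n/q⌋` and `⌈n/q⌉`. -/
def IsBlockPartition {n q : ℕ} (B : Fin n → Fin q) : Prop :=
  Monotone B ∧ ∀ j : Fin q,
    n / q ≤ (Finset.univ.filter (fun t => B t = j)).card ∧
    (Finset.univ.filter (fun t => B t = j)).card ≤ (n + q - 1) / q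

/-- The `(p,q,δ)`-block-independence property. -/
def BIP (n p q : ℕ) (δ : ℝ) (B : Fin n → Fin q) (μ : Equiv.Perm (Fin n) → ℝ) : Prop :=
  ∀ x : Fin p → Fin n, Function.Injective x → ∀ b : Fin p → Fin q,
    (1 - δ) * (1 / (q : ℝ)) ^ p ≤ prOf μ {π | ∀ i, B (π (x i)) = b i}

/-- The standard threshold secretary algorithm (with threshold after the first `T` blocks,
i.e. block indices `< T` are only observed) selects the maximum-value item: there is a time
`t` in a block of index `≥ T` which is the first post-threshold record
and the item arriving at time `t` has the maximum value.  Here `v y` is the value of item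
`y` and `π.symm t` is the item arriving at time `t`. -/
def SecretarySuccess {n q : ℕ} (B : Fin n → Fin q) (T : ℕ) (v : Fin n → ℝ)
    (π : Equiv.Perm (Fin n)) : Prop :=
  ∃ t : Fin n, T ≤ ((B t : Fin q) : ℕ) ∧
    (∀ s : Fin n, s < t →
      ¬ (T ≤ ((B s : Fin q) : ℕ) ∧ ∀ s' : Fin n, s' < s → v (π.symm s') < v (π.symm s))) ∧
    (∀ s : Fin n, s < t → v (π.symm s) < v (π.symm t)) ∧
    (∀ y : Fin n, v y ≤ v (π.symm t))

lemma prOf_nonneg {n : ℕ} (μ : Equiv.Perm (Fin n) → ℝ) (h0 : ∀ π, 0 ≤ μ π)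
    (E : Set (Equiv.Perm (Fin n))) : 0 ≤ prOf μ E := by
  refine Finset.sum_nonneg fun π _ => ?_
  split <;> [exact h0 π; exact le_refl 0]

lemma sum_prOf_le {n : ℕ} (μ : Equiv.Perm (Fin n) → ℝ) (h0 : ∀ π, 0 ≤ μ π)
    {ι : Type} (s : Finset ι) (f : ι → Set (Equiv.Perm (Fin n)))
    (E : Set (Equiv.Perm (Fin n))) (hsub : ∀ i ∈ s, f i ⊆ E)
    (hdisj : ∀ i ∈ s, ∀ j ∈ s, i ≠ j → Disjoint (f i) (f j)) :
    ∑ i ∈ s, prOf μ (f i) ≤ prOf μ E := by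
  unfold prOf
  rw [Finset.sum_comm]
  refine Finset.sum_le_sum fun π _ => ?_
  by_cases hx : ∃ i ∈ s, π ∈ f i
  · obtain ⟨i0, hi0, hπ0⟩ := hx
    rw [Finset.sum_eq_single_of_mem i0 hi0]
    · rw [if_pos hπ0, if_pos (hsub i0 hi0 hπ0)]
    · intro j hj hne
      rw [if_neg]
      exact fun hπj => Set.disjoint_left.mp (hdisj j hj i0 hi0 hne) hπj hπ0
  · push_neg at hx
    rw [Finset.sum_eq_zero fun j hj => if_neg (hx j hj)]
    split <;> [exact h0 π; exact le_refl 0]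

lemma exists_rank_equiv {n : ℕ} (v : Fin n → ℝ) (hv : Function.Injective v) :
    ∃ R : Fin n ≃ Fin n, ∀ a b, v a < v b ↔ R b < R a := by
  have hlt : ∀ a b : Fin n, v a < v b →
      (Finset.univ.filter fun w => v b < v w).card <
      (Finset.univ.filter fun w => v a < v w).card := by
    intro a b hab
    apply Finset.card_lt_card
    constructor
    · intro w hw
      simp only [Finset.mem_filter, Finset.mem_univ, true_and] at hw ⊢
      exact hab.trans hw
    · intro hss
      have hb : b ∈ Finset.univ.filter fun w => v a < v w := by simp [hab]
      have := hss hb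
      simp only [Finset.mem_filter, Finset.mem_univ, true_and] at this
      exact lt_irrefl _ this
  have hcard : ∀ a : Fin n, (Finset.univ.filter fun w => v a < v w).card < n := by
    intro a
    have h1 : (Finset.univ.filter fun w => v a < v w) ⊆ Finset.univ.erase a := by
      intro w hw
      simp only [Finset.mem_filter, Finset.mem_univ, true_and] at hw
      simp only [Finset.mem_erase, Finset.mem_univ, and_true]
      rintro rfl; exact lt_irrefl _ hw
    calc (Finset.univ.filter fun w => v a < v w).card
        ≤ (Finset.univ.erase a).card := Finset.card_le_card h1
      _ < Finset.univ.card := Finset.card_erase_lt_of_mem (Finset.mem_univ a)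
      _ = n := by simp
  set R0 : Fin n → Fin n := fun a => ⟨_, hcard a⟩ with hR0
  have hR0lt : ∀ a b, v a < v b → R0 b < R0 a := fun a b hab => hlt a b hab
  have hinj : Function.Injective R0 := by
    intro a b hab
    by_contra hne
    rcases lt_trichotomy (v a) (v b) with h | h | h
    · exact absurd hab.symm (ne_of_lt (hR0lt a b h))
    · exact hne (hv h)
    · exact absurd hab (ne_of_lt (hR0lt b a h))
  refine ⟨Equiv.ofBijective R0 (Finite.injective_iff_bijective.mp hinj), fun a b => ?_⟩
  constructor
  · exact hR0lt a b
  · intro h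
    rcases lt_trichotomy (v a) (v b) with h' | h' | h'
    · exact h'
    · exact absurd (hv h') (by rintro rfl; exact lt_irrefl _ h)
    · exact absurd (hR0lt b a h') (asymm h)

lemma success_of_atom {n p q T : ℕ} {B : Fin n → Fin q} (hBmono : Monotone B)
    {v : Fin n → ℝ} (hv : Function.Injective v) (y : Fin p → Fin n) (hp0 : 0 < p)
    (hymax : ∀ (z : Fin n) (k : Fin p), v (y k) < v z → ∃ k' : Fin p, k' < k ∧ z = y k')
    (m : Fin p) {π : Equiv.Perm (Fin n)} {i : ℕ} (hiT : T ≤ i)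
    (hb0 : ((B (π (y ⟨0, hp0⟩)) : Fin q) : ℕ) = i)
    (hbmid : ∀ k : Fin p, 0 < (k : ℕ) → (k : ℕ) < (m : ℕ) → i < ((B (π (y k)) : Fin q) : ℕ))
    (hbm : ((B (π (y m)) : Fin q) : ℕ) < T) :
    SecretarySuccess B T v π := by
  set y0 : Fin n := y ⟨0, hp0⟩ with hy0
  have hsymm : π.symm (π y0) = y0 := Equiv.symm_apply_apply π y0
  have hmaxle : ∀ z, v z ≤ v y0 := by
    intro z
    by_contra hc
    push_neg at hc
    obtain ⟨k', hk', -⟩ := hymax z ⟨0, hp0⟩ hc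
    exact absurd (Fin.lt_def.mp hk') (by simp)
  have hmaxlt : ∀ z, z ≠ y0 → v z < v y0 := fun z hz =>
    lt_of_le_of_ne (hmaxle z) fun h => hz (hv h)
  refine ⟨π y0, by rw [hb0]; exact hiT, ?_, ?_, ?_⟩
  · rintro s hst ⟨hsT, hrec⟩
    have hsm : π (y m) < s := by
      by_contra hns
      push_neg at hns
      have h1 : (B s : ℕ) ≤ (B (π (y m)) : ℕ) := hBmono hns
      omega
    have hlt : v (y m) < v (π.symm s) := by
      have := hrec (π (y m)) hsm
      rwa [Equiv.symm_apply_apply] at this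
    obtain ⟨k', hk'm, hz⟩ := hymax (π.symm s) m hlt
    have hs_eq : s = π (y k') := by rw [← hz, Equiv.apply_symm_apply]
    by_cases hk0 : (k' : ℕ) = 0
    · have hk'e : k' = ⟨0, hp0⟩ := Fin.ext hk0
      rw [hk'e] at hs_eq
      exact absurd hs_eq (ne_of_lt hst)
    · have hik : i < (B s : ℕ) := by
        rw [hs_eq]; exact hbmid k' (Nat.pos_of_ne_zero hk0) (Fin.lt_def.mp hk'm)
      have hle : (B s : ℕ) ≤ (B (π y0) : ℕ) := hBmono (le_of_lt hst)
      omega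
  · intro s hst
    rw [hsymm]
    refine hmaxlt _ fun hc => ?_
    rw [← hc, Equiv.apply_symm_apply] at hst
    exact lt_irrefl _ hst
  · intro z
    rw [hsymm]
    exact hmaxle z

lemma card_S (p q : ℕ) (i' T' : Fin q) (m : ℕ) (hm1 : 1 ≤ m) (hmp : m < p) :
    (Fintype.piFinset (fun k : Fin p =>
      if (k : ℕ) = 0 then {i'} else if (k : ℕ) < m then Finset.Ioi i'
      else if (k : ℕ) = m then Finset.Iio T' else Finset.univ)).card
    = (q - 1 - (i' : ℕ)) ^ (m - 1) * (T' : ℕ) * q ^ (p - 1 - m) := by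
  classical
  set g : ℕ → ℕ := fun j => if j = 0 then 1 else if j < m then q - 1 - (i' : ℕ)
    else if j = m then (T' : ℕ) else q with hg
  rw [Fintype.card_piFinset]
  have hcards : ∀ k : Fin p,
      (if (k : ℕ) = 0 then ({i'} : Finset (Fin q)) else if (k : ℕ) < m then Finset.Ioi i'
        else if (k : ℕ) = m then Finset.Iio T' else Finset.univ).card = g (k : ℕ) := by
    intro k
    simp only [hg]
    split_ifs <;> simp [Fin.card_Ioi, Fin.card_Iio, Fintype.card_fin]
  calc (∏ k : Fin p, (if (k : ℕ) = 0 then ({i'} : Finset (Fin q))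
        else if (k : ℕ) < m then Finset.Ioi i'
        else if (k : ℕ) = m then Finset.Iio T' else Finset.univ).card)
      = ∏ k : Fin p, g (k : ℕ) := Finset.prod_congr rfl fun k _ => hcards k
    _ = ∏ j ∈ Finset.range p, g j := by rw [Fin.prod_univ_eq_prod_range g p]
    _ = (q - 1 - (i' : ℕ)) ^ (m - 1) * (T' : ℕ) * q ^ (p - 1 - m) := by
        rw [Finset.range_eq_Ico,
          ← Finset.prod_Ico_consecutive g (Nat.zero_le 1) (le_of_lt (lt_of_le_of_lt hm1 hmp)),
          ← Finset.prod_Ico_consecutive g hm1 (le_of_lt hmp),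
          ← Finset.prod_Ico_consecutive g (Nat.le_succ m) hmp]
        have h01 : ∏ j ∈ Finset.Ico 0 1, g j = 1 := by simp [hg]
        have h1m : ∏ j ∈ Finset.Ico 1 m, g j = (q - 1 - (i' : ℕ)) ^ (m - 1) := by
          have : ∀ j ∈ Finset.Ico 1 m, g j = q - 1 - (i' : ℕ) := by
            intro j hj
            simp only [Finset.mem_Ico] at hj
            simp only [hg]
            rw [if_neg (by omega), if_pos hj.2]
          rw [Finset.prod_congr rfl this, Finset.prod_const, Nat.card_Ico]
        have hmm : ∏ j ∈ Finset.Ico m (m + 1), g j = (T' : ℕ) := by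
          rw [Nat.Ico_succ_singleton, Finset.prod_singleton]
          simp only [hg]
          rw [if_neg (by omega), if_neg (by omega)]
          simp
        have hrest : ∏ j ∈ Finset.Ico (m + 1) p, g j = q ^ (p - 1 - m) := by
          have : ∀ j ∈ Finset.Ico (m + 1) p, g j = q := by
            intro j hj
            simp only [Finset.mem_Ico] at hj
            simp only [hg]
            rw [if_neg (by omega), if_neg (by omega), if_neg (by omega)]
          rw [Finset.prod_congr rfl this, Finset.prod_const, Nat.card_Ico]
          congr 1; omega
        rw [h01, h1m, hmm, hrest, one_mul, mul_assoc]

lemma harmonic_telescope (T q : ℕ) (hTq : T ≤ q) :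
    Real.log ((q : ℝ) + 1) - Real.log ((T : ℝ) + 1) ≤ ∑ i ∈ Finset.Ico T q, 1 / ((i : ℝ) + 1) := by
  set G : ℕ → ℝ := fun j => Real.log ((T : ℝ) + 1 + j) with hG
  have htel : ∑ j ∈ Finset.range (q - T), (G (j + 1) - G j)
      = Real.log ((q : ℝ) + 1) - Real.log ((T : ℝ) + 1) := by
    rw [Finset.sum_range_sub G (q - T)]
    simp only [hG]
    congr 2
    · push_cast [Nat.cast_sub hTq]; ring
    · push_cast; ring
  rw [Finset.sum_Ico_eq_sum_range, ← htel]
  refine Finset.sum_le_sum fun j _ => ?_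
  have hu : (0 : ℝ) < (T : ℝ) + 1 + j := by positivity
  have h1 : G (j + 1) - G j = Real.log (((T : ℝ) + 1 + j + 1) / ((T : ℝ) + 1 + j)) := by
    rw [Real.log_div (by positivity) (ne_of_gt hu)]
    simp only [hG]
    push_cast
    ring_nf
  rw [h1]
  have h2 : Real.log (((T : ℝ) + 1 + j + 1) / ((T : ℝ) + 1 + j))
      ≤ ((T : ℝ) + 1 + j + 1) / ((T : ℝ) + 1 + j) - 1 :=
    Real.log_le_sub_one_of_pos (by positivity)
  have h3 : ((T : ℝ) + 1 + j + 1) / ((T : ℝ) + 1 + j) - 1 = 1 / ((T : ℝ) + 1 + j) := by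
    field_simp
    ring
  have h4 : (1 : ℝ) / ((T : ℝ) + 1 + j) = 1 / (((T + j : ℕ) : ℝ) + 1) := by
    push_cast; ring_nf
  linarith [h2, h3.le, h4.le]

lemma inner_geom (p : ℕ) (a Q : ℝ) (h : a ≠ Q) :
    ∑ m ∈ Finset.Ico 1 p, a ^ (m - 1) * Q ^ (p - 1 - m)
      = (Q ^ (p - 1) - a ^ (p - 1)) / (Q - a) := by
  rw [Finset.sum_Ico_eq_sum_range]
  have hcongr : ∀ j ∈ Finset.range (p - 1),
      a ^ (1 + j - 1) * Q ^ (p - 1 - (1 + j)) = a ^ j * Q ^ (p - 1 - 1 - j) := by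
    intro j hj
    congr 1
    · congr 1; omega
    · congr 1; omega
  rw [Finset.sum_congr rfl hcongr, eq_div_iff (sub_ne_zero.mpr (Ne.symm h))]
  have := geom_sum₂_mul a Q (p - 1)
  linear_combination -this

/-- under a `(p,q,δ)`-block-independent arrival distribution, the standard
threshold secretary algorithm with threshold `T = ⌊q/e⌋` picks the best item with
probability at least `1/e - (e+1)/q - δ - (1-1/e)^(p-1)`. -/
theorem secretary_bip (n p q : ℕ) (δ : ℝ) (B : Fin n → Fin q)
    (μ : Equiv.Perm (Fin n) → ℝ) (hμ : IsDist μ) (hB : IsBlockPartition B)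
    (hp : 1 ≤ p) (hpn : p ≤ n) (hq : 0 < q) (hqn : q ≤ n) (hδ : 0 ≤ δ)
    (h : BIP n p q δ B μ) (v : Fin n → ℝ) (hv : Function.Injective v) :
    1 / Real.exp 1 - (Real.exp 1 + 1) / q - δ - (1 - 1 / Real.exp 1) ^ (p - 1) ≤
      prOf μ {π | SecretarySuccess B ⌊(q : ℝ) / Real.exp 1⌋₊ v π} := by
  obtain ⟨hμ0, hμ1⟩ := hμ
  obtain ⟨hBmono, -⟩ := hB
  have he1 : (2.7182818283 : ℝ) < Real.exp 1 := Real.exp_one_gt_d9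
  have he2 : Real.exp 1 < 2.7182818286 := Real.exp_one_lt_d9
  have he0 : (0 : ℝ) < Real.exp 1 := Real.exp_pos 1
  set T : ℕ := ⌊(q : ℝ) / Real.exp 1⌋₊ with hTdef
  have hpr0 : 0 ≤ prOf μ {π | SecretarySuccess B T v π} := prOf_nonneg μ hμ0 _
  set C : ℝ := (1 - 1 / Real.exp 1) ^ (p - 1) with hCdef
  have hC0 : 0 ≤ C := by
    apply pow_nonneg
    rw [sub_nonneg, div_le_one he0]
    linarith
  have hC1 : C ≤ 1 := by
    apply pow_le_one₀
    · rw [sub_nonneg, div_le_one he0]; linarith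
    · have : 0 < 1 / Real.exp 1 := by positivity
      linarith
  by_cases htriv : 1 / Real.exp 1 - (Real.exp 1 + 1) / q - δ - C ≤ 0
  · linarith
  push_neg at htriv
  have hqR : (0 : ℝ) < q := by exact_mod_cast hq
  have hq1 : (0 : ℝ) < (Real.exp 1 + 1) / q := by positivity
  have hδ1 : δ < 1 := by
    have : 1 / Real.exp 1 < 1 := by rw [div_lt_one he0]; linarith
    linarith
  have hp2 : 2 ≤ p := by
    by_contra hc
    have hp1 : p = 1 := by omega
    have : C = 1 := by rw [hCdef, hp1]; norm_num
    have h5 : 1 / Real.exp 1 < 1 := by rw [div_lt_one he0]; linarith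
    linarith
  have hq11 : 11 ≤ q := by
    by_contra hc
    have hq10 : (q : ℝ) ≤ 10 := by exact_mod_cast (by omega : q ≤ 10)
    have h6 : (Real.exp 1 + 1) / 10 ≤ (Real.exp 1 + 1) / q :=
      div_le_div_of_nonneg_left (by linarith) hqR hq10
    have h7 : 1 / Real.exp 1 < (Real.exp 1 + 1) / 10 := by
      rw [div_lt_div_iff₀ he0 (by norm_num)]
      nlinarith
    linarith
  have hq11R : (11 : ℝ) ≤ q := by exact_mod_cast hq11
  -- facts about T
  have hTle : (T : ℝ) ≤ (q : ℝ) / Real.exp 1 := Nat.floor_le (by positivity)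
  have hTgt : (q : ℝ) / Real.exp 1 - 1 < T := Nat.sub_one_lt_floor _
  have hTq : T < q := by
    rw [hTdef]
    rw [Nat.floor_lt (by positivity)]
    rw [div_lt_iff₀ he0]
    nlinarith
  -- rank equivalence and top items
  obtain ⟨R, hR⟩ := exists_rank_equiv v hv
  have hp0 : 0 < p := hp
  set y : Fin p → Fin n := fun k => R.symm (Fin.castLE hpn k) with hy
  have hyinj : Function.Injective y := by
    intro a b hab
    have := R.symm.injective hab
    exact Fin.castLE_injective hpn this
  have hymax : ∀ (z : Fin n) (k : Fin p), v (y k) < v z → ∃ k' : Fin p, k' < k ∧ z = y k' := by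
    intro z k hzk
    have h1 : R z < R (y k) := (hR _ _).mp hzk
    have h2 : R (y k) = Fin.castLE hpn k := by rw [hy]; simp
    rw [h2] at h1
    have h3 : ((R z : Fin n) : ℕ) < (k : ℕ) := by
      have := Fin.lt_def.mp h1
      simpa using this
    refine ⟨⟨((R z : Fin n) : ℕ), lt_trans h3 k.isLt⟩, Fin.lt_def.mpr (by simpa using h3), ?_⟩
    rw [hy]
    simp only []
    have h4 : Fin.castLE hpn ⟨((R z : Fin n) : ℕ), lt_trans h3 k.isLt⟩ = R z := by
      apply Fin.ext; simp
    rw [h4, Equiv.symm_apply_apply]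
  -- the atom finsets
  set S : ℕ → ℕ → Finset (Fin p → Fin q) := fun i m => Fintype.piFinset (fun k =>
    if (k : ℕ) = 0 then {(⟨i % q, Nat.mod_lt i hq⟩ : Fin q)}
    else if (k : ℕ) < m then Finset.Ioi (⟨i % q, Nat.mod_lt i hq⟩ : Fin q)
    else if (k : ℕ) = m then Finset.Iio (⟨T, hTq⟩ : Fin q) else Finset.univ) with hSdef
  set A : Finset (ℕ × ℕ) := Finset.Ico T q ×ˢ Finset.Ico 1 p with hAdef
  -- subset into success event
  have hsub : ∀ im ∈ A, ∀ b ∈ S im.1 im.2,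
      {π : Equiv.Perm (Fin n) | ∀ k, B (π (y k)) = b k}
        ⊆ {π | SecretarySuccess B T v π} := by
    rintro ⟨i, m⟩ him b hb π hπ
    simp only [hAdef, Finset.mem_product, Finset.mem_Ico] at him
    obtain ⟨⟨hiT, hiq⟩, hm1, hmp⟩ := him
    simp only [hSdef, Fintype.mem_piFinset] at hb
    have hmod : i % q = i := Nat.mod_eq_of_lt hiq
    simp only [Set.mem_setOf_eq] at hπ ⊢
    refine success_of_atom hBmono hv y hp0 hymax ⟨m, hmp⟩ hiT ?_ ?_ ?_
    · have hb0 := hb ⟨0, hp0⟩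
      rw [if_pos rfl] at hb0
      rw [hπ ⟨0, hp0⟩, Finset.mem_singleton.mp hb0]
      exact hmod
    · intro k hk0 hkm
      have hbk := hb k
      rw [if_neg (by omega), if_pos (by simpa using hkm)] at hbk
      rw [hπ k]
      have := Finset.mem_Ioi.mp hbk
      have := Fin.lt_def.mp this
      simpa [hmod] using this
    · have hbm := hb ⟨m, hmp⟩
      rw [if_neg (by simp; omega), if_neg (by simp), if_pos (by simp)] at hbm
      rw [hπ ⟨m, hmp⟩]
      have := Finset.mem_Iio.mp hbm
      exact Fin.lt_def.mp this
  -- disjointness of the S family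
  have hkey : ∀ i m m', (i, m) ∈ A → m < m' → ∀ b : Fin p → Fin q,
      b ∈ S i m → b ∈ S i m' → False := by
    intro i m m' him hmm' b hb hb'
    simp only [hAdef, Finset.mem_product, Finset.mem_Ico] at him
    obtain ⟨⟨hiT, hiq⟩, hm1, hmp⟩ := him
    have hmod : i % q = i := Nat.mod_eq_of_lt hiq
    simp only [hSdef, Fintype.mem_piFinset] at hb hb'
    have h1 := hb ⟨m, hmp⟩
    rw [if_neg (by simp; omega), if_neg (by simp), if_pos (by simp)] at h1
    have h2 := hb' ⟨m, hmp⟩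
    rw [if_neg (by simp; omega), if_pos (by simpa using hmm')] at h2
    have hlt1 : ((b ⟨m, hmp⟩ : Fin q) : ℕ) < T := Fin.lt_def.mp (Finset.mem_Iio.mp h1)
    have hlt2 : i % q < ((b ⟨m, hmp⟩ : Fin q) : ℕ) := Fin.lt_def.mp (Finset.mem_Ioi.mp h2)
    omega
  have hSdisj : ∀ im ∈ A, ∀ im' ∈ A, im ≠ im' → Disjoint (S im.1 im.2) (S im'.1 im'.2) := by
    rintro ⟨i, m⟩ him ⟨i', m'⟩ him' hne
    rw [Finset.disjoint_left]
    intro b hb hb'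
    have hiq : i < q := by
      simp only [hAdef, Finset.mem_product, Finset.mem_Ico] at him; omega
    have hi'q : i' < q := by
      simp only [hAdef, Finset.mem_product, Finset.mem_Ico] at him'; omega
    have hii' : i = i' := by
      simp only [hSdef, Fintype.mem_piFinset] at hb hb'
      have h1 := hb ⟨0, hp0⟩
      have h2 := hb' ⟨0, hp0⟩
      rw [if_pos rfl] at h1 h2
      have e1 := Finset.mem_singleton.mp h1
      have e2 := Finset.mem_singleton.mp h2
      have he : (⟨i % q, Nat.mod_lt i hq⟩ : Fin q) = ⟨i' % q, Nat.mod_lt i' hq⟩ := by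
        rw [← e1, e2]
      have hval : i % q = i' % q := by
        have := congrArg Fin.val he
        simpa using this
      rwa [Nat.mod_eq_of_lt hiq, Nat.mod_eq_of_lt hi'q] at hval
    subst hii'
    have hmm' : m ≠ m' := fun hcc => hne (by rw [hcc])
    rcases lt_trichotomy m m' with hlt | heq | hlt
    · exact hkey i m m' him hlt b hb hb'
    · exact hmm' heq
    · exact hkey i m' m him' hlt b hb' hb
  -- the union of atoms
  set SS : Finset (Fin p → Fin q) := A.biUnion (fun im => S im.1 im.2) with hSSdef
  have hcard : SS.card = ∑ im ∈ A, (q - 1 - im.1) ^ (im.2 - 1) * T * q ^ (p - 1 - im.2) := by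
    rw [hSSdef, Finset.card_biUnion hSdisj]
    refine Finset.sum_congr rfl ?_
    rintro ⟨i, m⟩ him
    simp only [hAdef, Finset.mem_product, Finset.mem_Ico] at him
    obtain ⟨⟨hiT, hiq⟩, hm1, hmp⟩ := him
    have hmod : i % q = i := Nat.mod_eq_of_lt hiq
    have hcs := card_S p q ⟨i % q, Nat.mod_lt i hq⟩ ⟨T, hTq⟩ m hm1 hmp
    simp only [hSdef]
    rw [hcs]
    simp [hmod]
  -- the probability lower bound
  have hmain : (SS.card : ℝ) * ((1 - δ) * (1 / (q : ℝ)) ^ p)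
      ≤ prOf μ {π | SecretarySuccess B T v π} := by
    calc (SS.card : ℝ) * ((1 - δ) * (1 / (q : ℝ)) ^ p)
        = ∑ _b ∈ SS, (1 - δ) * (1 / (q : ℝ)) ^ p := by
          rw [Finset.sum_const, nsmul_eq_mul]
      _ ≤ ∑ b ∈ SS, prOf μ {π : Equiv.Perm (Fin n) | ∀ k, B (π (y k)) = b k} :=
          Finset.sum_le_sum fun b _ => h y hyinj b
      _ ≤ prOf μ {π | SecretarySuccess B T v π} := by
          refine sum_prOf_le μ hμ0 SS _ _ ?_ ?_
          · intro b hb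
            obtain ⟨im, him, hbS⟩ := Finset.mem_biUnion.mp hb
            exact hsub im him b hbS
          · intro b _ b' _ hne
            rw [Set.disjoint_left]
            intro π h1' h2'
            exact hne (funext fun k => (h1' k).symm.trans (h2' k))
  -- cast the cardinality to ℝ
  set total : ℝ := ∑ im ∈ A, ((q : ℝ) - 1 - im.1) ^ (im.2 - 1) * T * (q : ℝ) ^ (p - 1 - im.2)
    with htotaldef
  have hcast : (SS.card : ℝ) = total := by
    rw [hcard, htotaldef, Nat.cast_sum]
    refine Finset.sum_congr rfl ?_
    rintro ⟨i, m⟩ him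
    simp only [hAdef, Finset.mem_product, Finset.mem_Ico] at him
    obtain ⟨⟨hiT, hiq⟩, hm1, hmp⟩ := him
    have h1 : ((q - 1 - i : ℕ) : ℝ) = (q : ℝ) - 1 - i := by
      rw [Nat.cast_sub (by omega), Nat.cast_sub (by omega : 1 ≤ q)]
      push_cast
      ring
    push_cast [h1]
    ring
  -- per-block lower bound
  set H : ℝ := ∑ i ∈ Finset.Ico T q, 1 / ((i : ℝ) + 1) with hHdef
  have hper : ∀ i ∈ Finset.Ico T q,
      (1 - C) * ((T : ℝ) / q) * (1 / ((i : ℝ) + 1))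
        ≤ (∑ m ∈ Finset.Ico 1 p, ((q : ℝ) - 1 - i) ^ (m - 1) * (T : ℝ) * (q : ℝ) ^ (p - 1 - m))
          * (1 / (q : ℝ)) ^ p := by
    intro i hi
    obtain ⟨hiT, hiq⟩ := Finset.mem_Ico.mp hi
    have hiR : (i : ℝ) + 1 ≤ (q : ℝ) := by exact_mod_cast hiq
    set a : ℝ := (q : ℝ) - 1 - i with hadef
    have ha0 : (0 : ℝ) ≤ a := by rw [hadef]; linarith
    have haq : a ≠ (q : ℝ) := by rw [hadef]; intro hcc; have : (i : ℝ) ≥ 0 := by positivity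
                                 linarith
    have hgeo : ∑ m ∈ Finset.Ico 1 p, a ^ (m - 1) * (T : ℝ) * (q : ℝ) ^ (p - 1 - m)
        = (T : ℝ) * (((q : ℝ) ^ (p - 1) - a ^ (p - 1)) / ((q : ℝ) - a)) := by
      rw [← inner_geom p a q haq, Finset.mul_sum]
      exact Finset.sum_congr rfl fun m _ => by ring
    rw [hgeo]
    have hqa : (q : ℝ) - a = (i : ℝ) + 1 := by rw [hadef]; ring
    rw [hqa]
    have hTiR : (T : ℝ) ≤ (i : ℝ) := by exact_mod_cast hiT
    have hap : a ^ (p - 1) ≤ C * (q : ℝ) ^ (p - 1) := by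
      have h1 : a ≤ (q : ℝ) * (1 - 1 / Real.exp 1) := by
        have hqe : (q : ℝ) * (1 - 1 / Real.exp 1) = (q : ℝ) - (q : ℝ) / Real.exp 1 := by ring
        rw [hadef]
        linarith [hTgt]
      calc a ^ (p - 1) ≤ ((q : ℝ) * (1 - 1 / Real.exp 1)) ^ (p - 1) :=
            pow_le_pow_left₀ ha0 h1 _
        _ = C * (q : ℝ) ^ (p - 1) := by rw [mul_pow, hCdef]; ring
    have hqp : (q : ℝ) ^ p = (q : ℝ) ^ (p - 1) * q := by
      conv_lhs => rw [show p = (p - 1) + 1 by omega]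
      rw [pow_succ]
    have hi1 : (0 : ℝ) < (i : ℝ) + 1 := by positivity
    have hqp1 : (0 : ℝ) < (q : ℝ) ^ (p - 1) := by positivity
    have hT0 : (0 : ℝ) ≤ (T : ℝ) := Nat.cast_nonneg T
    have key : (1 - C) * (T : ℝ) * (q : ℝ) ^ (p - 1)
        ≤ (T : ℝ) * ((q : ℝ) ^ (p - 1) - a ^ (p - 1)) := by
      nlinarith [mul_nonneg hT0 (sub_nonneg.mpr hap)]
    have lhs_eq : (1 - C) * ((T : ℝ) / q) * (1 / ((i : ℝ) + 1))
        = ((1 - C) * (T : ℝ) * (q : ℝ) ^ (p - 1)) / ((q : ℝ) ^ (p - 1) * q * ((i : ℝ) + 1)) := by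
      field_simp
    have rhs_eq : (T : ℝ) * (((q : ℝ) ^ (p - 1) - a ^ (p - 1)) / ((i : ℝ) + 1))
          * (1 / (q : ℝ)) ^ p
        = ((T : ℝ) * ((q : ℝ) ^ (p - 1) - a ^ (p - 1)))
          / ((q : ℝ) ^ (p - 1) * q * ((i : ℝ) + 1)) := by
      rw [div_pow, one_pow, hqp, div_eq_mul_inv, div_eq_mul_inv, div_eq_mul_inv,
        mul_inv, mul_inv, mul_inv]
      ring
    rw [lhs_eq, rhs_eq]
    exact div_le_div_of_nonneg_right key (by positivity)
  -- sum the per-block bounds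
  have htotal : (1 - C) * ((T : ℝ) / q) * H ≤ total * (1 / (q : ℝ)) ^ p := by
    have h1 : total * (1 / (q : ℝ)) ^ p
        = ∑ i ∈ Finset.Ico T q,
            (∑ m ∈ Finset.Ico 1 p, ((q : ℝ) - 1 - i) ^ (m - 1) * (T : ℝ) * (q : ℝ) ^ (p - 1 - m))
              * (1 / (q : ℝ)) ^ p := by
      rw [htotaldef, hAdef, Finset.sum_product, Finset.sum_mul]
    have h2 : (1 - C) * ((T : ℝ) / q) * H
        = ∑ i ∈ Finset.Ico T q, (1 - C) * ((T : ℝ) / q) * (1 / ((i : ℝ) + 1)) := by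
      rw [hHdef, Finset.mul_sum]
    rw [h1, h2]
    exact Finset.sum_le_sum hper
  -- bounds on H
  have hHlog : Real.log ((q : ℝ) + 1) - Real.log ((T : ℝ) + 1) ≤ H :=
    harmonic_telescope T q (le_of_lt hTq)
  have hHlb : 1 - (Real.exp 1 - 1) / ((q : ℝ) + 1) ≤ H := by
    have h1 : (T : ℝ) + 1 ≤ ((q : ℝ) + Real.exp 1) / Real.exp 1 := by
      have h1' : ((q : ℝ) + Real.exp 1) / Real.exp 1 = (q : ℝ) / Real.exp 1 + 1 := by
        field_simp
      linarith [hTle]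
    have h2 : Real.log ((T : ℝ) + 1) ≤ Real.log (((q : ℝ) + Real.exp 1) / Real.exp 1) :=
      Real.log_le_log (by positivity) h1
    have h3 : Real.log (((q : ℝ) + Real.exp 1) / Real.exp 1)
        = Real.log ((q : ℝ) + Real.exp 1) - 1 := by
      rw [Real.log_div (by positivity) (ne_of_gt he0), Real.log_exp]
    have h4 : Real.log ((q : ℝ) + Real.exp 1) - Real.log ((q : ℝ) + 1)
        ≤ (Real.exp 1 - 1) / ((q : ℝ) + 1) := by
      rw [← Real.log_div (by positivity) (by positivity)]
      have h5 := Real.log_le_sub_one_of_pos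
        (show (0 : ℝ) < ((q : ℝ) + Real.exp 1) / ((q : ℝ) + 1) by positivity)
      have h6 : ((q : ℝ) + Real.exp 1) / ((q : ℝ) + 1) - 1
          = (Real.exp 1 - 1) / ((q : ℝ) + 1) := by
        field_simp
        ring
      linarith
    linarith
  have hH0 : 0 ≤ H := Finset.sum_nonneg fun i _ => by positivity
  have hHub : H ≤ ((q : ℝ) - T) / ((T : ℝ) + 1) := by
    have h1 : ∀ i ∈ Finset.Ico T q, 1 / ((i : ℝ) + 1) ≤ 1 / ((T : ℝ) + 1) := by
      intro i hi
      have h1' : (T : ℝ) ≤ i := by exact_mod_cast (Finset.mem_Ico.mp hi).1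
      exact one_div_le_one_div_of_le (by positivity) (by linarith)
    calc H ≤ (Finset.Ico T q).card • (1 / ((T : ℝ) + 1)) := Finset.sum_le_card_nsmul _ _ _ h1
      _ = ((q : ℝ) - T) / ((T : ℝ) + 1) := by
          rw [Nat.card_Ico, nsmul_eq_mul, Nat.cast_sub (le_of_lt hTq)]
          ring
  have hTq0 : (0 : ℝ) ≤ (T : ℝ) / q := by positivity
  set X : ℝ := (T : ℝ) / q * H with hXdef
  have hX0 : 0 ≤ X := mul_nonneg hTq0 hH0
  have hX1 : X ≤ 1 := by
    have h1 : X ≤ (T : ℝ) / q * (((q : ℝ) - T) / ((T : ℝ) + 1)) :=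
      mul_le_mul_of_nonneg_left hHub hTq0
    have hT0 : (0 : ℝ) ≤ (T : ℝ) := Nat.cast_nonneg T
    have hTqR : (T : ℝ) ≤ (q : ℝ) := by exact_mod_cast le_of_lt hTq
    have h2 : (T : ℝ) / q * (((q : ℝ) - T) / ((T : ℝ) + 1)) ≤ 1 := by
      rw [div_mul_div_comm, div_le_one (by positivity)]
      nlinarith [sq_nonneg (T : ℝ)]
    linarith
  have hTqlb : 1 / Real.exp 1 - 1 / (q : ℝ) ≤ (T : ℝ) / q := by
    have h1 : ((q : ℝ) / Real.exp 1 - 1) / q ≤ (T : ℝ) / q :=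
      div_le_div_of_nonneg_right hTgt.le hqR.le
    have h3 : ((q : ℝ) / Real.exp 1 - 1) / q = 1 / Real.exp 1 - 1 / q := by
      field_simp
    linarith
  have hs0 : 0 ≤ (Real.exp 1 - 1) / ((q : ℝ) + 1) :=
    div_nonneg (by linarith) (by positivity)
  have hs1 : (Real.exp 1 - 1) / ((q : ℝ) + 1) ≤ 1 := by
    rw [div_le_one (by positivity)]
    linarith
  have hfac0 : 0 ≤ 1 / Real.exp 1 - 1 / (q : ℝ) := by
    rw [sub_nonneg]
    exact one_div_le_one_div_of_le he0 (by linarith)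
  have hmul : (1 / Real.exp 1 - 1 / (q : ℝ)) * (1 - (Real.exp 1 - 1) / ((q : ℝ) + 1)) ≤ X :=
    mul_le_mul hTqlb hHlb (by linarith) hTq0
  have hXlb : 1 / Real.exp 1 - (Real.exp 1 + 1) / q ≤ X := by
    have hb1 : 1 / Real.exp 1 - 1 / (q : ℝ) ≤ 1 / Real.exp 1 := by
      have : (0 : ℝ) ≤ 1 / (q : ℝ) := by positivity
      linarith
    have hb2 : (Real.exp 1 - 1) / ((q : ℝ) + 1) ≤ (Real.exp 1 - 1) / (q : ℝ) :=
      div_le_div_of_nonneg_left (by linarith) hqR (by linarith)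
    have hb3 : (1 / Real.exp 1 - 1 / (q : ℝ)) * ((Real.exp 1 - 1) / ((q : ℝ) + 1))
        ≤ (1 / Real.exp 1) * ((Real.exp 1 - 1) / (q : ℝ)) :=
      mul_le_mul hb1 hb2 hs0 (by positivity)
    have hinv : Real.exp 1 * (1 / Real.exp 1) = 1 := by
      field_simp
    have hb4' : (1 / Real.exp 1) * (Real.exp 1 - 1) ≤ Real.exp 1 := by
      nlinarith [hinv, he1]
    have hb4 : (1 / Real.exp 1) * ((Real.exp 1 - 1) / (q : ℝ)) ≤ Real.exp 1 / (q : ℝ) := by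
      have heq : (1 / Real.exp 1) * ((Real.exp 1 - 1) / (q : ℝ))
          = ((1 / Real.exp 1) * (Real.exp 1 - 1)) / (q : ℝ) := by ring
      rw [heq]
      exact div_le_div_of_nonneg_right hb4' hqR.le
    have hexp : (1 / Real.exp 1 - 1 / (q : ℝ)) * (1 - (Real.exp 1 - 1) / ((q : ℝ) + 1))
        = (1 / Real.exp 1 - 1 / (q : ℝ))
          - (1 / Real.exp 1 - 1 / (q : ℝ)) * ((Real.exp 1 - 1) / ((q : ℝ) + 1)) := by ring
    have heq2 : (Real.exp 1 + 1) / (q : ℝ) - 1 / (q : ℝ) = Real.exp 1 / (q : ℝ) := by ring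
    linarith [hmul, hb3, hb4]
  -- final numeric inequality
  have hδ0 : (0 : ℝ) ≤ 1 - δ := by linarith
  have hnum : 1 / Real.exp 1 - (Real.exp 1 + 1) / q - δ - C ≤ (1 - δ) * ((1 - C) * X) := by
    have hXC : X * (1 - C) ≤ 1 := mul_le_one₀ hX1 (by linarith) (by linarith)
    have k1 : X - C - δ ≤ (1 - δ) * ((1 - C) * X) := by
      linarith [mul_nonneg hC0 (sub_nonneg.mpr hX1), mul_nonneg hδ (sub_nonneg.mpr hXC)]
    linarith [hXlb]
  -- assemble
  have hstep : (1 - δ) * ((1 - C) * X) ≤ (SS.card : ℝ) * ((1 - δ) * (1 / (q : ℝ)) ^ p) := by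
    have h1 : (1 - C) * X = (1 - C) * ((T : ℝ) / q) * H := by rw [hXdef]; ring
    have h2 : (1 - C) * X ≤ total * (1 / (q : ℝ)) ^ p := by rw [h1]; exact htotal
    have h3 : (1 - δ) * ((1 - C) * X) ≤ (1 - δ) * (total * (1 / (q : ℝ)) ^ p) :=
      mul_le_mul_of_nonneg_left h2 hδ0
    calc (1 - δ) * ((1 - C) * X) ≤ (1 - δ) * (total * (1 / (q : ℝ)) ^ p) := h3
      _ = (SS.card : ℝ) * ((1 - δ) * (1 / (q : ℝ)) ^ p) := by rw [hcast]; ring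
  linarith [hnum, hstep, hmain]
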